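/- For every n ≥ 2 and h ≥ 0, the set of bargraphs of semiperimeter n whose leftmost horizontal segment has width greater than h is in bijection with the set of bargraphs of semiperimeter n−h; explicitly, a bijection is given by deleting h of the H steps from the leftmost horizontal segment. -/

import Mathlib

/-- Steps of bargraphs / Motzkin paths. -/
inductive Step where
  | U : Step
  | H : Step
  | D : Step
deriving DecidableEq

/-- Vertical displacement of a step. -/
def Step.val : Step → ℤ
  | .U => 1
  | .H => 0
  | .D => -1

/-- Mirror of a step (swap U and D). -/
def Step.mirror : Step → Step
  | .U => .D
  | .H => .H
  | .D => .U

/-- Final height of a word. -/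
def hgt (w : List Step) : ℤ := (w.map Step.val).sum

/-- A Motzkin path prefix: never goes below the x-axis. -/
def IsMotzkinPrefix (w : List Step) : Prop := ∀ p : List Step, p <+: w → 0 ≤ hgt p

/-- A Motzkin path: never below the x-axis, ends at height 0. -/
def IsMotzkin (w : List Step) : Prop := IsMotzkinPrefix w ∧ hgt w = 0

/-- No peak `UD` and no valley `DU`. -/
def Cornerless (w : List Step) : Prop :=
  ¬ [Step.U, Step.D] <:+: w ∧ ¬ [Step.D, Step.U] <:+: w

/-- A bargraph: starts at the origin, ends on the x-axis, stays strictly above the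
x-axis except at the endpoints, and has no factor `UD` or `DU`. -/
def IsBargraph (w : List Step) : Prop :=
  2 ≤ w.length ∧ hgt w = 0 ∧
    (∀ p : List Step, p <+: w → p ≠ [] → p ≠ w → 0 < hgt p) ∧ Cornerless w

/-- Semiperimeter: number of `U` steps plus number of `H` steps. -/
def semi (w : List Step) : ℕ := w.count Step.U + w.count Step.H

/-- Length of the initial run of `U` steps. -/
def leadU : List Step → ℕ
  | Step.U :: rest => leadU rest + 1
  | _ => 0

/-- Length of the initial run of `H` steps. -/
def leadH : List Step → ℕ
  | Step.H :: rest => leadH rest + 1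
  | _ => 0

/-- Length of the initial run of `D` steps. -/
def leadD : List Step → ℕ
  | Step.D :: rest => leadD rest + 1
  | _ => 0

/-- Length of the first maximal run of `D` steps (0 if none). -/
def firstDescLen : List Step → ℕ
  | [] => 0
  | Step.D :: rest => leadD rest + 1
  | _ :: rest => firstDescLen rest

/-- Number of occurrences of the two-letter factor `a b`. -/
def cnt2 (a b : Step) : List Step → ℕ
  | x :: y :: rest => (if x = a ∧ y = b then 1 else 0) + cnt2 a b (y :: rest)
  | _ => 0

/-- Heights of the columns (`H` steps), starting from a given height. -/
def colHeights : ℤ → List Step → List ℤ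
  | _, [] => []
  | h, Step.U :: rest => colHeights (h + 1) rest
  | h, Step.H :: rest => h :: colHeights h rest
  | h, Step.D :: rest => colHeights (h - 1) rest

/-- Width of the leftmost maximal horizontal segment (0 if none). -/
def lhsW : List Step → ℕ
  | [] => 0
  | Step.H :: rest => leadH rest + 1
  | _ :: rest => lhsW rest

/-- Delete `h` steps at the start of the leftmost horizontal segment. -/
def stripLeadH (h : ℕ) : List Step → List Step
  | [] => []
  | Step.H :: rest => List.drop h (Step.H :: rest)
  | s :: rest => s :: stripLeadH h rest

/-- Number of initial columns of height 1: largest `j` such that the word begins `U H^j`. -/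
def iuc : List Step → ℕ
  | Step.U :: rest => leadH rest
  | _ => 0

/-- Number of maximal horizontal segments. -/
def hsCount : List Step → ℕ
  | [] => 0
  | [Step.H] => 1
  | [_] => 0
  | a :: b :: rest => (if a = Step.H ∧ b ≠ Step.H then 1 else 0) + hsCount (b :: rest)

/-- Mirror image: reverse the word and swap `U` with `D`. -/
def mir (w : List Step) : List Step := (w.reverse).map Step.mirror

/-- Shape of strictly alternating bargraphs:
`U^{i₁} H D^{k₁} H U^{i₂} H D^{k₂} H ⋯ U^{iₘ} H D^{kₘ}` with all `iᵣ, kᵣ ≥ 1`. -/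
inductive SAShape : List Step → Prop where
  | base (i k : ℕ) : 1 ≤ i → 1 ≤ k →
      SAShape (List.replicate i Step.U ++ [Step.H] ++ List.replicate k Step.D)
  | cons (i k : ℕ) (w : List Step) : 1 ≤ i → 1 ≤ k → SAShape w →
      SAShape (List.replicate i Step.U ++ [Step.H] ++ List.replicate k Step.D ++ [Step.H] ++ w)

/-- A strictly alternating bargraph. -/
def IsStrictAlt (w : List Step) : Prop := IsBargraph w ∧ SAShape w

/-- A secondary structure on `{0, …, m-1}`: all consecutive edges are present, every
vertex has at most one non-consecutive neighbour, and there are no crossing edges. -/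
def IsSecondaryStructure {m : ℕ} (G : SimpleGraph (Fin m)) : Prop :=
  (∀ i j : Fin m, (i : ℕ) + 1 = (j : ℕ) → G.Adj i j) ∧
  (∀ i j k : Fin m, G.Adj i j → G.Adj i k →
      (i : ℕ) + 1 ≠ (j : ℕ) → (j : ℕ) + 1 ≠ (i : ℕ) →
      (i : ℕ) + 1 ≠ (k : ℕ) → (k : ℕ) + 1 ≠ (i : ℕ) → j = k) ∧
  ¬ ∃ i j k l : Fin m, (i : ℕ) < (j : ℕ) ∧ (j : ℕ) < (k : ℕ) ∧ (k : ℕ) < (l : ℕ) ∧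
      G.Adj i k ∧ G.Adj j l

/-- Generating function of bargraphs: `x` (variable 0) marks `H` steps,
`y` (variable 1) marks `U` steps. -/
noncomputable def BG : MvPowerSeries (Fin 2) ℚ :=
  fun d => (Nat.card {w : List Step //
    IsBargraph w ∧ w.count Step.H = d 0 ∧ w.count Step.U = d 1} : ℚ)

/-- Generating function of cornerless Motzkin paths. -/
noncomputable def MG : MvPowerSeries (Fin 2) ℚ :=
  fun d => (Nat.card {w : List Step //
    IsMotzkin w ∧ Cornerless w ∧ w.count Step.H = d 0 ∧ w.count Step.U = d 1} : ℚ)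

/-- Generating function of bargraphs avoiding the factor `DH`. -/
noncomputable def BDH : MvPowerSeries (Fin 2) ℚ :=
  fun d => (Nat.card {w : List Step //
    IsBargraph w ∧ ¬ [Step.D, Step.H] <:+: w ∧
      w.count Step.H = d 0 ∧ w.count Step.U = d 1} : ℚ)

/-- Generating function of bargraphs avoiding the factors `DH` and `HH`. -/
noncomputable def BDHHH : MvPowerSeries (Fin 2) ℚ :=
  fun d => (Nat.card {w : List Step //
    IsBargraph w ∧ ¬ [Step.D, Step.H] <:+: w ∧ ¬ [Step.H, Step.H] <:+: w ∧
      w.count Step.H = d 0 ∧ w.count Step.U = d 1} : ℚ)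

/-- Generating function of cornerless Motzkin path prefixes ending at height `h`. -/
noncomputable def Pgf (h : ℕ) : MvPowerSeries (Fin 2) ℚ :=
  fun d => (Nat.card {w : List Step //
    IsMotzkinPrefix w ∧ Cornerless w ∧ hgt w = (h : ℤ) ∧
      w.count Step.H = d 0 ∧ w.count Step.U = d 1} : ℚ)

/-- Decomposition `G = U^a G₁ H G₂ D^a` of a strictly alternating bargraph. -/
def SADecomp (t : ℕ × List Step × List Step) (G : List Step) : Prop :=
  1 ≤ t.1 ∧ IsStrictAlt t.2.1 ∧ IsStrictAlt (Step.U :: (t.2.2 ++ [Step.D])) ∧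
    G = List.replicate t.1 Step.U ++ t.2.1 ++ [Step.H] ++ t.2.2 ++
      List.replicate t.1 Step.D

/-! ### Auxiliary development -/

/-- The "no corner" relation on adjacent steps. -/
def Rstep (x y : Step) : Prop :=
  ¬(x = Step.U ∧ y = Step.D) ∧ ¬(x = Step.D ∧ y = Step.U)

lemma Rstep_refl (x : Step) : Rstep x x := by cases x <;> simp [Rstep]

lemma Rstep_H_left (y : Step) : Rstep Step.H y := by cases y <;> simp [Rstep]

lemma Rstep_H_right (x : Step) : Rstep x Step.H := by cases x <;> simp [Rstep]

lemma hgt_append (l m : List Step) : hgt (l ++ m) = hgt l + hgt m := by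
  simp [hgt]

lemma hgt_replicate_U (n : ℕ) : hgt (List.replicate n Step.U) = n := by
  simp [hgt, Step.val]

lemma hgt_replicate_H (n : ℕ) : hgt (List.replicate n Step.H) = 0 := by
  simp [hgt, Step.val]

lemma not_chain'_imp : ∀ w : List Step, ¬ List.Chain' Rstep w →
    ([Step.U, Step.D] <:+: w ∨ [Step.D, Step.U] <:+: w)
  | [], h => absurd List.isChain_nil h
  | [x], h => absurd (List.isChain_singleton x) h
  | x :: y :: t, h => by
      unfold List.Chain' at h
      rw [List.isChain_cons_cons] at h
      by_cases hR : Rstep x y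
      · have ht : ¬ List.Chain' Rstep (y :: t) := fun hc => h ⟨hR, hc⟩
        rcases not_chain'_imp (y :: t) ht with h1 | h1
        · exact Or.inl (h1.trans (List.infix_cons (List.infix_refl _)))
        · exact Or.inr (h1.trans (List.infix_cons (List.infix_refl _)))
      · have : (x = Step.U ∧ y = Step.D) ∨ (x = Step.D ∧ y = Step.U) := by
          cases x <;> cases y <;> simp_all [Rstep]
        rcases this with ⟨rfl, rfl⟩ | ⟨rfl, rfl⟩
        · exact Or.inl ⟨[], t, rfl⟩
        · exact Or.inr ⟨[], t, rfl⟩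

lemma cornerless_iff_chain' (w : List Step) : Cornerless w ↔ List.Chain' Rstep w := by
  constructor
  · intro hc
    by_contra h
    rcases not_chain'_imp w h with h1 | h1
    · exact hc.1 h1
    · exact hc.2 h1
  · intro h
    constructor <;> intro hin <;> have := List.IsChain.infix h hin <;>
      simp [List.Chain', List.isChain_cons_cons, Rstep] at this

lemma leadU_spec : ∀ w : List Step,
    ∃ t, w = List.replicate (leadU w) Step.U ++ t ∧ t.head? ≠ some Step.U
  | [] => ⟨[], rfl, by simp⟩
  | Step.U :: rest => by
      obtain ⟨t, h1, h2⟩ := leadU_spec rest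
      refine ⟨t, ?_, h2⟩
      show Step.U :: rest = List.replicate (leadU rest + 1) Step.U ++ t
      rw [List.replicate_succ, List.cons_append, ← h1]
  | Step.H :: rest => ⟨Step.H :: rest, by simp [leadU], by simp⟩
  | Step.D :: rest => ⟨Step.D :: rest, by simp [leadU], by simp⟩

lemma leadH_spec : ∀ w : List Step,
    ∃ t, w = List.replicate (leadH w) Step.H ++ t ∧ t.head? ≠ some Step.H
  | [] => ⟨[], rfl, by simp⟩
  | Step.H :: rest => by
      obtain ⟨t, h1, h2⟩ := leadH_spec rest
      refine ⟨t, ?_, h2⟩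
      show Step.H :: rest = List.replicate (leadH rest + 1) Step.H ++ t
      rw [List.replicate_succ, List.cons_append, ← h1]
  | Step.U :: rest => ⟨Step.U :: rest, by simp [leadH], by simp⟩
  | Step.D :: rest => ⟨Step.D :: rest, by simp [leadH], by simp⟩

lemma leadU_eq (a : ℕ) {t : List Step} (ht : t.head? ≠ some Step.U) :
    leadU (List.replicate a Step.U ++ t) = a := by
  induction a with
  | zero =>
      simp only [List.replicate_zero, List.nil_append]
      cases t with
      | nil => rfl
      | cons x r => cases x <;> simp_all [leadU]
  | succ n ih => rw [List.replicate_succ, List.cons_append, leadU, ih]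

lemma leadH_eq (b : ℕ) {t : List Step} (ht : t.head? ≠ some Step.H) :
    leadH (List.replicate b Step.H ++ t) = b := by
  induction b with
  | zero =>
      simp only [List.replicate_zero, List.nil_append]
      cases t with
      | nil => rfl
      | cons x r => cases x <;> simp_all [leadH]
  | succ n ih => rw [List.replicate_succ, List.cons_append, leadH, ih]

lemma lhsW_eq (a : ℕ) {b : ℕ} (hb : 1 ≤ b) {r : List Step}
    (hr : r.head? ≠ some Step.H) :
    lhsW (List.replicate a Step.U ++ List.replicate b Step.H ++ r) = b := by
  induction a with
  | zero =>
      obtain ⟨b', rfl⟩ : ∃ b', b = b' + 1 := ⟨b - 1, by omega⟩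
      simp only [List.replicate_zero, List.nil_append, List.replicate_succ,
        List.cons_append]
      rw [lhsW, leadH_eq b' hr]
  | succ n ih =>
      rw [List.replicate_succ, List.cons_append, List.cons_append]
      rw [show lhsW (Step.U :: (List.replicate n Step.U ++ List.replicate b Step.H ++ r))
          = lhsW (List.replicate n Step.U ++ List.replicate b Step.H ++ r) from rfl]
      exact ih

lemma stripLeadH_eq (h a : ℕ) {b : ℕ} (hb : 1 ≤ b) (r : List Step) :
    stripLeadH h (List.replicate a Step.U ++ List.replicate b Step.H ++ r)
      = List.replicate a Step.U ++ List.drop h (List.replicate b Step.H ++ r) := by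
  obtain ⟨b', rfl⟩ : ∃ b', b = b' + 1 := ⟨b - 1, by omega⟩
  induction a with
  | zero =>
      simp only [List.replicate_zero, List.nil_append, List.replicate_succ,
        List.cons_append]
      rfl
  | succ n ih =>
      rw [List.replicate_succ, List.cons_append, List.cons_append]
      rw [show stripLeadH h (Step.U :: (List.replicate n Step.U ++
            List.replicate (b' + 1) Step.H ++ r))
          = Step.U :: stripLeadH h (List.replicate n Step.U ++
            List.replicate (b' + 1) Step.H ++ r) from rfl, ih]
      rfl

lemma drop_rep_H {h b : ℕ} (hb : h ≤ b) (r : List Step) :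
    List.drop h (List.replicate b Step.H ++ r)
      = List.replicate (b - h) Step.H ++ r := by
  rw [List.drop_append, List.drop_replicate]
  congr 1
  rw [List.length_replicate, Nat.sub_eq_zero_of_le hb, List.drop_zero]

lemma semi_append (l m : List Step) : semi (l ++ m) = semi l + semi m := by
  simp [semi, List.count_append]; omega

lemma semi_replicate_U (n : ℕ) : semi (List.replicate n Step.U) = n := by
  simp [semi, List.count_replicate]

lemma semi_replicate_H (n : ℕ) : semi (List.replicate n Step.H) = n := by
  simp [semi, List.count_replicate]

lemma prefix_append_cases {α : Type*} {p l m : List α} (h : p <+: l ++ m) :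
    p <+: l ∨ ∃ q, q <+: m ∧ p = l ++ q := by
  rcases Nat.le_total p.length l.length with hl | hl
  · exact Or.inl (List.prefix_of_prefix_length_le h (l.prefix_append m) hl)
  · have h2 : l <+: p := List.prefix_of_prefix_length_le (l.prefix_append m) h hl
    obtain ⟨q, rfl⟩ := h2
    obtain ⟨t, ht⟩ := h
    rw [List.append_assoc] at ht
    exact Or.inr ⟨q, ⟨t, List.append_cancel_left ht⟩, rfl⟩

lemma prefix_replicate {α : Type*} {p : List α} {n : ℕ} {x : α}
    (h : p <+: List.replicate n x) : p = List.replicate p.length x :=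
  List.eq_replicate_of_mem fun _ hb =>
    List.eq_of_mem_replicate (h.sublist.subset hb)

lemma drop_left_rep {a : ℕ} {x : Step} {t : List Step} :
    List.drop a (List.replicate a x ++ t) = t := by
  have := List.drop_left (l₁ := List.replicate a x) (l₂ := t)
  rwa [List.length_replicate] at this

/-- Characterization of bargraphs of the form `U^a H^b r`, independent of `b ≥ 1`. -/
lemma bar_char {a b : ℕ} (ha : 1 ≤ a) (hb : 1 ≤ b) (r : List Step) :
    IsBargraph (List.replicate a Step.U ++ List.replicate b Step.H ++ r) ↔
      ((a : ℤ) + hgt r = 0 ∧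
        (∀ s, s <+: r → s ≠ r → 0 < (a : ℤ) + hgt s) ∧ List.Chain' Rstep r) := by
  constructor
  · rintro ⟨hlen, h0, hpos, hcor⟩
    refine ⟨?_, ?_, ?_⟩
    · rw [List.append_assoc, hgt_append, hgt_append, hgt_replicate_U,
        hgt_replicate_H] at h0
      omega
    · intro s hs hsne
      obtain ⟨t, rfl⟩ := hs
      have hp : (List.replicate a Step.U ++ List.replicate b Step.H ++ s)
          <+: (List.replicate a Step.U ++ List.replicate b Step.H ++ (s ++ t)) :=
        ⟨t, by simp [List.append_assoc]⟩
      have hne2 : List.replicate a Step.U ++ List.replicate b Step.H ++ s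
          ≠ List.replicate a Step.U ++ List.replicate b Step.H ++ (s ++ t) := by
        intro hEq
        exact hsne (List.append_cancel_left hEq)
      have := hpos _ hp (by
        intro hc
        have := congrArg List.length hc
        simp at this
        omega) hne2
      rw [hgt_append, hgt_append, hgt_replicate_U, hgt_replicate_H] at this
      omega
    · have hsuf : r <:+ (List.replicate a Step.U ++ List.replicate b Step.H ++ r) :=
        ⟨List.replicate a Step.U ++ List.replicate b Step.H, by simp⟩
      exact List.IsChain.infix ((cornerless_iff_chain' _).mp hcor) hsuf.isInfix
  · rintro ⟨h0, hpos, hch⟩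
    refine ⟨?_, ?_, ?_, ?_⟩
    · simp only [List.length_append, List.length_replicate]
      omega
    · rw [List.append_assoc, hgt_append, hgt_append, hgt_replicate_U,
        hgt_replicate_H]
      omega
    · intro p hp hpne hpw
      rw [List.append_assoc] at hp
      rcases prefix_append_cases hp with hq | ⟨q, hq, rfl⟩
      · have hpl := prefix_replicate hq
        rw [hpl, hgt_replicate_U]
        have : p.length ≠ 0 := fun hc => hpne (List.eq_nil_of_length_eq_zero hc)
        omega
      · rcases prefix_append_cases hq with hq2 | ⟨s, hs, rfl⟩
        · have := prefix_replicate hq2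
          rw [hgt_append, hgt_replicate_U, this, hgt_replicate_H]
          omega
        · have hsne : s ≠ r := by
            intro hc
            subst hc
            exact hpw (by rw [List.append_assoc])
          have := hpos s hs hsne
          rw [hgt_append, hgt_append, hgt_replicate_U, hgt_replicate_H]
          omega
    · rw [cornerless_iff_chain', List.append_assoc]; unfold List.Chain'; rw [List.isChain_append]
      refine ⟨List.isChain_replicate_of_rel _ (Rstep_refl _), ?_, ?_⟩
      · rw [List.isChain_append]
        refine ⟨List.isChain_replicate_of_rel _ (Rstep_refl _), hch, ?_⟩
        intro x hx y _
        rw [List.getLast?_replicate] at hx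
        simp only [Option.mem_def, Option.ite_none_left_eq_some, Option.some.injEq] at hx
        rw [← hx.2]
        exact Rstep_H_left y
      · intro x hx y hy
        rw [List.getLast?_replicate] at hx
        simp only [Option.mem_def, Option.ite_none_left_eq_some, Option.some.injEq] at hx
        obtain ⟨b', rfl⟩ : ∃ b', b = b' + 1 := ⟨b - 1, by omega⟩
        rw [List.replicate_succ, List.cons_append] at hy
        simp only [List.head?_cons, Option.mem_def, Option.some.injEq] at hy
        rw [← hx.2, ← hy]
        exact Rstep_H_right _

/-- Decomposition of a bargraph as `U^a H^b r`. -/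
lemma bar_decomp {w : List Step} (hw : IsBargraph w) :
    ∃ a b r, w = List.replicate a Step.U ++ List.replicate b Step.H ++ r ∧
      1 ≤ a ∧ 1 ≤ b ∧ r.head? ≠ some Step.H ∧ leadU w = a ∧ lhsW w = b ∧
      semi w = a + b + semi r := by
  obtain ⟨hlen, h0, hpos, hcor⟩ := hw
  obtain ⟨t, hsplit, htU⟩ := leadU_spec w
  obtain ⟨a, ha_def⟩ : ∃ a, leadU w = a := ⟨_, rfl⟩
  rw [ha_def] at hsplit
  -- w starts with U
  have hw_ne : w ≠ [] := by intro hc; rw [hc] at hlen; simp at hlen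
  obtain ⟨x, w', rfl⟩ : ∃ x w', w = x :: w' := by
    cases w with
    | nil => exact absurd rfl hw_ne
    | cons x w' => exact ⟨x, w', rfl⟩
  have hx : x = Step.U := by
    have hpre : [x] <+: x :: w' := ⟨w', rfl⟩
    have hne : [x] ≠ x :: w' := by
      intro hc
      have h2 := congrArg List.length hc
      simp at h2
      subst h2
      simp at hlen
    have := hpos [x] hpre (by simp) hne
    cases x <;> simp [hgt, Step.val] at this ⊢
  subst hx
  have ha : 1 ≤ a := by simp [leadU] at ha_def; omega
  -- t nonempty
  have htne : t ≠ [] := by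
    intro hc
    rw [hc, List.append_nil] at hsplit
    rw [hsplit, hgt_replicate_U] at h0
    have : a = 0 := by exact_mod_cast h0
    omega
  obtain ⟨y, t', rfl⟩ : ∃ y t', t = y :: t' := by
    cases t with
    | nil => exact absurd rfl htne
    | cons y t' => exact ⟨y, t', rfl⟩
  have hy : y = Step.H := by
    cases y with
    | H => rfl
    | U => simp at htU
    | D =>
        exfalso
        apply hcor.1
        obtain ⟨a', ha'⟩ : ∃ a', a = a' + 1 := ⟨a - 1, by omega⟩
        refine ⟨List.replicate a' Step.U, t', ?_⟩
        rw [hsplit, ha', List.replicate_succ']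
        simp [List.append_assoc]
  subst hy
  obtain ⟨r, hsplit2, hrH⟩ := leadH_spec t'
  obtain ⟨b', hb'_def⟩ : ∃ b', leadH t' = b' := ⟨_, rfl⟩
  rw [hb'_def] at hsplit2
  have key : Step.U :: w' = List.replicate a Step.U ++ List.replicate (b' + 1) Step.H ++ r := by
    rw [hsplit, hsplit2]
    simp [List.replicate_succ]
  refine ⟨a, b' + 1, r, key, ha, by omega, hrH, ha_def, ?_, ?_⟩
  · rw [key]; exact lhsW_eq a (by omega) hrH
  · rw [key, semi_append, semi_append, semi_replicate_U, semi_replicate_H]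

/-- bargraphs of semiperimeter `n` whose leftmost horizontal segment has
width `> h` are in bijection with bargraphs of semiperimeter `n - h`, by deleting `h`
of the `H` steps from the leftmost horizontal segment. -/
theorem lhs_bijection :
    ∀ n h : ℕ, 2 ≤ n →
      ∃ e : {w : List Step // IsBargraph w ∧ semi w = n ∧ h < lhsW w} ≃
            {w : List Step // IsBargraph w ∧ semi w = n - h},
        ∀ w, (e w).1 = stripLeadH h w.1 := by
  intro n h hn
  refine ⟨{
    toFun := fun w => ⟨stripLeadH h w.1, by
      obtain ⟨w, hw, hsemi, hlhs⟩ := w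
      obtain ⟨a, b, r, rfl, ha, hb, hr, hlead, hlhsW, hsemi'⟩ := bar_decomp hw
      rw [hlhsW] at hlhs
      rw [stripLeadH_eq h a hb, drop_rep_H (le_of_lt hlhs), ← List.append_assoc]
      refine ⟨(bar_char ha (by omega) r).mpr ((bar_char ha hb r).mp hw), ?_⟩
      rw [semi_append, semi_append, semi_replicate_U, semi_replicate_H]
      omega⟩
    invFun := fun v => ⟨List.replicate (leadU v.1) Step.U ++ List.replicate h Step.H ++
        List.drop (leadU v.1) v.1, by
      obtain ⟨v, hv, hsemi⟩ := v
      obtain ⟨a, b, r, rfl, ha, hb, hr, hlead, hlhsW, hsemi'⟩ := bar_decomp hv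
      have hdrop : List.drop a (List.replicate a Step.U ++ List.replicate b Step.H ++ r)
          = List.replicate b Step.H ++ r := by
        rw [List.append_assoc]; exact drop_left_rep
      simp only [hlead]
      rw [hdrop]
      rw [show List.replicate a Step.U ++ List.replicate h Step.H ++
            (List.replicate b Step.H ++ r)
          = List.replicate a Step.U ++ List.replicate (h + b) Step.H ++ r by
        have h2 : List.replicate h Step.H ++ (List.replicate b Step.H ++ r)
            = List.replicate (h + b) Step.H ++ r := by
          rw [← List.append_assoc, List.replicate_append_replicate]
        rw [List.append_assoc, h2, ← List.append_assoc]]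
      refine ⟨(bar_char ha (by omega) r).mpr ((bar_char ha hb r).mp hv), ?_, ?_⟩
      · rw [semi_append, semi_append, semi_replicate_U, semi_replicate_H]
        omega
      · rw [lhsW_eq a (by omega) hr]
        omega⟩
    left_inv := by
      intro w
      obtain ⟨w, hw, hsemi, hlhs⟩ := w
      obtain ⟨a, b, r, rfl, ha, hb, hr, hlead, hlhsW, hsemi'⟩ := bar_decomp hw
      rw [hlhsW] at hlhs
      apply Subtype.ext
      dsimp only
      rw [stripLeadH_eq h a hb, drop_rep_H (le_of_lt hlhs)]
      obtain ⟨c, hc⟩ : ∃ c, b - h = c + 1 := ⟨b - h - 1, by omega⟩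
      rw [hc]
      have hhead : (List.replicate (c + 1) Step.H ++ r).head? ≠ some Step.U := by
        rw [List.replicate_succ, List.cons_append]; simp
      rw [leadU_eq a hhead, drop_left_rep]
      have h2 : List.replicate h Step.H ++ (List.replicate (c + 1) Step.H ++ r)
          = List.replicate b Step.H ++ r := by
        rw [← List.append_assoc, List.replicate_append_replicate,
          show h + (c + 1) = b by omega]
      rw [List.append_assoc, h2, ← List.append_assoc]
    right_inv := by
      intro v
      obtain ⟨v, hv, hsemi⟩ := v
      obtain ⟨a, b, r, rfl, ha, hb, hr, hlead, hlhsW, hsemi'⟩ := bar_decomp hv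
      have hdrop : List.drop a (List.replicate a Step.U ++ List.replicate b Step.H ++ r)
          = List.replicate b Step.H ++ r := by
        rw [List.append_assoc]; exact drop_left_rep
      apply Subtype.ext
      dsimp only
      simp only [hlead]
      rw [hdrop]
      rw [show List.replicate a Step.U ++ List.replicate h Step.H ++
            (List.replicate b Step.H ++ r)
          = List.replicate a Step.U ++ List.replicate (h + b) Step.H ++ r by
        have h2 : List.replicate h Step.H ++ (List.replicate b Step.H ++ r)
            = List.replicate (h + b) Step.H ++ r := by
          rw [← List.append_assoc, List.replicate_append_replicate]
        rw [List.append_assoc, h2, ← List.append_assoc]]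
      rw [stripLeadH_eq h a (by omega), drop_rep_H (by omega : h ≤ h + b),
        show h + b - h = b by omega, ← List.append_assoc] }, fun w => rfl⟩
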